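/- Let A₁, …, A_C be real matrices each with d rows whose column spaces are pairwise orthogonal, i.e., A_iᵀ A_j = 0 for all i ≠ j. Then the nuclear norm of their column-wise concatenation equals the sum of their nuclear norms: ‖[A₁, …, A_C]‖_* = ∑_{c=1}^{C} ‖A_c‖_*. -/

import Mathlib

open Matrix Polynomial Finset

/-- The nuclear norm of a real matrix: the sum of its singular values,
i.e. the square roots of the eigenvalues of `Mᴴ * M`. -/
noncomputable def nuclearNorm {m n : Type*} [Fintype m] [Fintype n] [DecidableEq n]
    (M : Matrix m n ℝ) : ℝ :=
  ∑ i, Real.sqrt ((Matrix.isHermitian_conjTranspose_mul_self M).eigenvalues i)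

/-- Column-wise concatenation of a family of matrices `A c : Matrix (Fin d) (Fin (n c)) ℝ`,
indexed by the sigma type of the column indices. -/
def concatColumns {d C : ℕ} {n : Fin C → ℕ}
    (A : ∀ c, Matrix (Fin d) (Fin (n c)) ℝ) :
    Matrix (Fin d) ((c : Fin C) × Fin (n c)) ℝ :=
  Matrix.of fun i p => A p.1 i p.2

section aux

variable {n : Type*} [Fintype n] [DecidableEq n]

lemma charmatrix_diagonal {R : Type*} [CommRing R] (v : n → R) :
    charmatrix (diagonal v) = diagonal (fun i => (X : R[X]) - C (v i)) := by
  ext i j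
  by_cases hij : i = j
  · subst hij; simp [charmatrix_apply, diagonal_apply_eq]
  · simp [charmatrix_apply_ne _ _ _ hij, diagonal_apply_ne _ hij]

lemma charpoly_diagonal {R : Type*} [CommRing R] (v : n → R) :
    (diagonal v).charpoly = ∏ i, ((X : R[X]) - C (v i)) := by
  rw [Matrix.charpoly, _root_.charmatrix_diagonal, det_diagonal]

lemma charpoly_conj {R : Type*} [CommRing R] (U D V : Matrix n n R)
    (h1 : U * V = 1) : (U * D * V).charpoly = D.charpoly := by
  have key : charmatrix (U * D * V) = U.map C * charmatrix D * V.map C := by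
    have hs : U.map C * Matrix.scalar n (X : R[X]) * V.map C
        = Matrix.scalar n (X : R[X]) := by
      rw [← scalar_commute (X : R[X]) (Commute.all X) (U.map C)]
      rw [Matrix.mul_assoc, ← Matrix.map_mul, h1]
      simp
    calc charmatrix (U * D * V)
        = Matrix.scalar n (X : R[X]) - (U * D * V).map C := rfl
      _ = U.map C * Matrix.scalar n (X : R[X]) * V.map C
            - U.map C * D.map C * V.map C := by rw [hs, Matrix.map_mul, Matrix.map_mul]
      _ = U.map C * (Matrix.scalar n (X : R[X]) - D.map C) * V.map C := by
          rw [Matrix.mul_sub, Matrix.sub_mul]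
  have hdet : (U.map C).det * (V.map C).det = 1 := by
    rw [← det_mul, ← Matrix.map_mul, h1]; simp
  rw [Matrix.charpoly, key, det_mul, det_mul, Matrix.charpoly]
  calc (U.map C).det * D.charmatrix.det * (V.map C).det
      = D.charmatrix.det * ((U.map C).det * (V.map C).det) := by ring
    _ = D.charmatrix.det := by rw [hdet, mul_one]

lemma charpoly_isHermitian_real {B : Matrix n n ℝ} (hB : B.IsHermitian) :
    B.charpoly = ∏ i, ((X : ℝ[X]) - C (hB.eigenvalues i)) := by
  have := hB.spectral_theorem
  have hU : (hB.eigenvectorUnitary : Matrix n n ℝ) * (star hB.eigenvectorUnitary : Matrix n n ℝ) = 1 := by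
    simpa using congrArg (fun u => (u : Matrix n n ℝ)) (mul_star_self_of_mem hB.eigenvectorUnitary.2)
  conv_lhs => rw [this, Unitary.conjStarAlgAut_apply]
  rw [charpoly_conj _ _ _ hU]
  have : (RCLike.ofReal ∘ hB.eigenvalues : n → ℝ) = hB.eigenvalues := by
    ext i; simp
  rw [this, _root_.charpoly_diagonal]

lemma sum_f_eigenvalues {B : Matrix n n ℝ} (hB : B.IsHermitian) (f : ℝ → ℝ) :
    ∑ i, f (hB.eigenvalues i) = (B.charpoly.roots.map f).sum := by
  have : B.charpoly.roots = Finset.univ.val.map hB.eigenvalues := by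
    rw [charpoly_isHermitian_real hB]
    rw [Finset.prod_eq_multiset_prod]
    have he : (fun i => (X : ℝ[X]) - C (hB.eigenvalues i))
        = (fun a => (X : ℝ[X]) - C a) ∘ hB.eigenvalues := rfl
    rw [he, ← Multiset.map_map]
    exact roots_multiset_prod_X_sub_C _
  rw [this, Multiset.map_map]
  rfl
end aux

def blockEquiv {C : ℕ} {n : Fin C → ℕ} (c : Fin C) :
    {p : (c' : Fin C) × Fin (n c') // p.1 = c} ≃ Fin (n c) where
  toFun p := Fin.cast (by rw [p.2]) p.1.2
  invFun k := ⟨⟨c, k⟩, rfl⟩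
  left_inv p := by obtain ⟨⟨c', k⟩, hc⟩ := p; subst hc; rfl
  right_inv k := rfl

/-- If the column spaces of `A₁, …, A_C` are pairwise orthogonal
(`A_iᵀ A_j = 0` for `i ≠ j`), then the nuclear norm of their column-wise
concatenation equals the sum of their nuclear norms. -/
theorem nuclearNorm_concatColumns_eq_of_orthogonal {d C : ℕ} {n : Fin C → ℕ}
    (A : ∀ c, Matrix (Fin d) (Fin (n c)) ℝ)
    (h : ∀ i j, i ≠ j → (A i)ᵀ * (A j) = 0) :
    nuclearNorm (concatColumns A) = ∑ c, nuclearNorm (A c) := by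
  set M := concatColumns A with hM
  set G := Mᴴ * M with hG
  -- entries of G
  have hGentry : ∀ p q : (c : Fin C) × Fin (n c),
      G p q = ((A p.1)ᵀ * (A q.1)) p.2 q.2 := by
    intro p q
    simp [hG, hM, Matrix.mul_apply, Matrix.conjTranspose_apply, concatColumns]
  -- G is block triangular w.r.t. first component
  have hBT : G.BlockTriangular Sigma.fst := by
    intro p q hlt
    rw [hGentry, h _ _ (by exact fun e => absurd e (ne_of_gt hlt))]
    exact rfl
  -- each diagonal block has the charpoly of (A c)ᵀ * A c
  have hblock : ∀ c, (G.toSquareBlock Sigma.fst c).charpoly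
      = ((A c)ᴴ * (A c)).charpoly := by
    intro c
    rw [← Matrix.charpoly_reindex (blockEquiv c)]
    congr 1
  -- charpoly of G is the product of charpolys
  have hcp : G.charpoly = ∏ c, ((A c)ᴴ * (A c)).charpoly := by
    rw [Matrix.charpoly, (charmatrix_blockTriangular_iff.2 hBT).det_fintype]
    refine Finset.prod_congr rfl fun c _ => ?_
    rw [← Matrix.charmatrix_toSquareBlock, ← Matrix.charpoly, hblock]
  -- roots of G's charpoly
  have hne : ∀ c : Fin C, ((A c)ᴴ * (A c)).charpoly ≠ 0 :=
    fun c => (Matrix.charpoly_monic _).ne_zero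
  have hroots : G.charpoly.roots
      = Finset.univ.val.bind (fun c => ((A c)ᴴ * (A c)).charpoly.roots) := by
    rw [hcp]
    exact roots_prod _ _ (Finset.prod_ne_zero_iff.2 fun c _ => hne c)
  -- put everything together
  rw [nuclearNorm, sum_f_eigenvalues (Matrix.isHermitian_conjTranspose_mul_self M) Real.sqrt]
  rw [← hG]
  rw [hroots, Multiset.map_bind, Multiset.sum_bind]
  rw [Finset.sum_eq_multiset_sum]
  congr 1
  refine Multiset.map_congr rfl fun c _ => ?_
  rw [nuclearNorm, sum_f_eigenvalues (Matrix.isHermitian_conjTranspose_mul_self (A c)) Real.sqrt]
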